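/- The valuation (truth) function val: Formula → Bool → Bool → Bool (as an explanation under assignment enumeration) and the H_X-provability indicator are isomorphic on the paper's data set X (classes 𝕋 and ℂ) but not isomorphic on X ∪ {Peirce's law}: on X, being a classical tautology coincides with being H_X-provable, but Peirce's law is a classical tautology and not H_X-provable. -/

import Mathlib

/-- Propositional formulas over ¬ and →. -/
inductive Fm where
  | var : Nat → Fm
  | neg : Fm → Fm
  | imp : Fm → Fm → Fm
deriving DecidableEq

open Fm

/-- Classical two-valued evaluation (→ is material implication). -/
def evalB (v : Nat → Bool) : Fm → Bool
  | var n => v n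
  | neg φ => ! evalB v φ
  | imp φ ψ => !(evalB v φ) || evalB v ψ

/-- Negation of the three-valued matrix 𝔗'. -/
def gneg : Fin 3 → Fin 3 := ![1, 2, 1]

/-- Implication of the three-valued matrix 𝔗'. -/
def gimp : Fin 3 → Fin 3 → Fin 3 := ![![2, 1, 2], ![2, 2, 2], ![0, 1, 2]]

/-- Evaluation in the three-valued matrix 𝔗'. -/
def eval3 (v : Nat → Fin 3) : Fm → Fin 3
  | var n => v n
  | neg φ => gneg (eval3 v φ)
  | imp φ ψ => gimp (eval3 v φ) (eval3 v ψ)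

/-- Uniform substitution of formulas for variables. -/
def subst (s : Nat → Fm) : Fm → Fm
  | var n => s n
  | neg φ => neg (subst s φ)
  | imp φ ψ => imp (subst s φ) (subst s ψ)

/-- Provability in the Hilbert system H_X: axiom schemas X1–X4,
    closed under modus ponens and uniform substitution. -/
inductive Prov : Fm → Prop where
  | x1 : Prov (imp (var 0) (imp (var 1) (var 0)))
  | x2 : Prov (imp (imp (var 0) (imp (var 1) (var 2)))
           (imp (imp (var 0) (var 1)) (imp (var 0) (var 2))))
  | x3 : Prov (imp (neg (var 0)) (imp (var 0) (var 1)))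
  | x4 : Prov (imp (imp (var 0) (neg (var 0))) (neg (var 0)))
  | mp {φ ψ : Fm} : Prov (imp φ ψ) → Prov φ → Prov ψ
  | sub {φ : Fm} (s : Nat → Fm) : Prov φ → Prov (subst s φ)

/-- Peirce's law ((p → q) → p) → p. -/
def peirceFm : Fm := imp (imp (imp (var 0) (var 1)) (var 0)) (var 0)

open Fm

/-- Class 𝕋 of the paper's data set. -/
def classT : List Fm :=
  [ imp (var 0) (imp (var 1) (var 0)),
    imp (imp (var 0) (imp (var 1) (var 2)))
      (imp (imp (var 0) (var 1)) (imp (var 0) (var 2))),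
    imp (neg (var 0)) (imp (var 0) (var 1)),
    imp (imp (var 0) (neg (var 0))) (neg (var 0)),
    imp (var 0) (neg (neg (var 0))),
    imp (neg (neg (neg (neg (var 0))))) (neg (neg (var 0))),
    neg (neg (imp (neg (neg (neg (neg (var 0))))) (neg (neg (var 0))))),
    imp (imp (var 0) (var 1)) (imp (neg (var 1)) (neg (var 0))),
    imp (imp (var 0) (neg (var 1))) (imp (var 1) (neg (var 0))),
    neg (imp (imp (neg (var 0)) (neg (var 0))) (neg (imp (var 1) (neg (neg (var 1)))))),
    neg (neg (imp (imp (imp (var 0) (var 1)) (var 0)) (var 0))) ]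

/-- Class ℂ of the paper's data set. -/
def classC : List Fm :=
  [ neg (imp (var 0) (imp (var 1) (var 0))),
    neg (imp (imp (var 0) (imp (var 1) (var 2)))
      (imp (imp (var 0) (var 1)) (imp (var 0) (var 2)))),
    neg (imp (neg (var 0)) (imp (var 0) (var 1))),
    neg (imp (imp (var 0) (neg (var 0))) (neg (var 0))),
    neg (imp (var 0) (neg (neg (var 0)))),
    neg (imp (neg (neg (neg (neg (var 0))))) (neg (neg (var 0)))),
    neg (neg (neg (imp (neg (neg (neg (neg (var 0))))) (neg (neg (var 0)))))),
    neg (imp (imp (var 0) (var 1)) (imp (neg (var 1)) (neg (var 0)))),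
    neg (imp (imp (var 0) (neg (var 1))) (imp (var 1) (neg (var 0)))),
    imp (imp (neg (var 0)) (neg (var 0))) (neg (imp (var 1) (neg (neg (var 1))))),
    neg (imp (imp (imp (var 0) (var 1)) (var 0)) (var 0)) ]

/-- Explanations f₁ : U → Y₁ and f₂ : U → Y₂ are isomorphic on X ⊆ U:
there is a bijection g between the images f₁(X) and f₂(X) with
f₂(x) = g(f₁(x)) for all x ∈ X. -/
def IsoOn {U Y₁ Y₂ : Type*} (f₁ : U → Y₁) (f₂ : U → Y₂) (X : Set U) : Prop :=
  ∃ g : Y₁ → Y₂, Set.BijOn g (f₁ '' X) (f₂ '' X) ∧ ∀ x ∈ X, f₂ x = g (f₁ x)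

/-- The classical truth function of a formula, as an explanation. -/
def truthFn (φ : Fm) : (Nat → Bool) → Bool := fun v => evalB v φ

/-- The H_X-provability indicator, as an explanation. -/
def provInd (φ : Fm) : Prop := Prov φ

/-- The paper's data set: classes 𝕋 and ℂ. -/
def dataSet : Set Fm := {φ | φ ∈ classT ∨ φ ∈ classC}

namespace HXAux

def s3 (A B C : Fm) : Nat → Fm
  | 0 => A
  | 1 => B
  | _ => C

lemma ax1 (A B : Fm) : Prov (imp A (imp B A)) := Prov.sub (s3 A B A) Prov.x1

lemma ax2 (A B C : Fm) :
    Prov (imp (imp A (imp B C)) (imp (imp A B) (imp A C))) :=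
  Prov.sub (s3 A B C) Prov.x2

lemma ax3 (A B : Fm) : Prov (imp (neg A) (imp A B)) := Prov.sub (s3 A B A) Prov.x3

lemma ax4 (A : Fm) : Prov (imp (imp A (neg A)) (neg A)) := Prov.sub (s3 A A A) Prov.x4

lemma provId (A : Fm) : Prov (imp A A) :=
  ((ax2 A (imp A A) A).mp (ax1 A (imp A A))).mp (ax1 A A)

lemma hsyl {A B C : Fm} (h1 : Prov (imp A B)) (h2 : Prov (imp B C)) :
    Prov (imp A C) :=
  ((ax2 A B C).mp ((ax1 (imp B C) A).mp h2)).mp h1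

/-- Deduction from a list of hypotheses. -/
inductive Ded (Γ : List Fm) : Fm → Prop
  | hyp {φ} : φ ∈ Γ → Ded Γ φ
  | thm {φ} : Prov φ → Ded Γ φ
  | mp {φ ψ} : Ded Γ (imp φ ψ) → Ded Γ φ → Ded Γ ψ

lemma Ded.weaken {Γ Δ : List Fm} {φ} (h : Ded Γ φ) (hsub : ∀ x ∈ Γ, x ∈ Δ) :
    Ded Δ φ := by
  induction h with
  | hyp h => exact .hyp (hsub _ h)
  | thm h => exact .thm h
  | mp _ _ ih1 ih2 => exact .mp ih1 ih2

lemma Ded.hsyl {Γ : List Fm} {A B C : Fm} (h1 : Ded Γ (imp A B))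
    (h2 : Ded Γ (imp B C)) : Ded Γ (imp A C) :=
  Ded.mp (Ded.mp (.thm (ax2 A B C)) (Ded.mp (.thm (ax1 (imp B C) A)) h2)) h1

lemma deduction {Γ : List Fm} {A B : Fm} (h : Ded (A :: Γ) B) :
    Ded Γ (imp A B) := by
  induction h with
  | @hyp φ hm =>
    rcases List.mem_cons.mp hm with h | h
    · rw [h]; exact .thm (provId A)
    · exact .mp (.thm (ax1 φ A)) (.hyp h)
  | @thm φ hp => exact .mp (.thm (ax1 φ A)) (.thm hp)
  | @mp φ ψ _ _ ih1 ih2 => exact .mp (.mp (.thm (ax2 A φ ψ)) ih1) ih2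

lemma Ded.toProv {φ : Fm} (h : Ded [] φ) : Prov φ := by
  induction h with
  | hyp h => simp at h
  | thm h => exact h
  | mp _ _ ih1 ih2 => exact ih1.mp ih2

lemma dni (A : Fm) : Prov (imp A (neg (neg A))) := by
  apply Ded.toProv
  apply deduction
  exact Ded.mp (.thm (ax4 (neg A)))
    (deduction (Ded.mp (Ded.mp (.thm (ax3 A (neg (neg A)))) (.hyp (by simp)))
      (.hyp (by simp))))

lemma contrapos (A B : Fm) : Prov (imp (imp A B) (imp (neg B) (neg A))) := by
  apply Ded.toProv
  apply deduction
  apply deduction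
  -- Γ = [¬B, A→B] ⊢ ¬A
  have h1 : Ded [neg B, imp A B] (imp A B) := .hyp (by simp)
  have h2 : Ded [neg B, imp A B] (imp B (neg A)) :=
    .mp (.thm (ax3 B (neg A))) (.hyp (by simp))
  exact .mp (.thm (ax4 A)) (h1.hsyl h2)

lemma tne (A : Fm) : Prov (imp (neg (neg (neg A))) (neg A)) :=
  (contrapos A (neg (neg A))).mp (dni A)

lemma perm9 : Prov (imp (imp (var 0) (neg (var 1))) (imp (var 1) (neg (var 0)))) := by
  apply Ded.toProv
  apply deduction
  apply deduction
  -- Γ = [q, p→¬q] ⊢ ¬p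
  set p := var 0
  set q := var 1
  have h1 : Ded [q, imp p (neg q)] (imp p (neg q)) := .hyp (by simp)
  have hq : Ded [q, imp p (neg q)] q := .hyp (by simp)
  have hnnq : Ded [q, imp p (neg q)] (neg (neg q)) := .mp (.thm (dni q)) hq
  have h2 : Ded [q, imp p (neg q)] (imp (neg q) (neg p)) :=
    .mp (.thm (ax3 (neg q) (neg p))) hnnq
  exact .mp (.thm (ax4 p)) (h1.hsyl h2)

lemma negImpNeg {A B : Fm} (hA : Prov A) (hB : Prov B) :
    Prov (neg (imp A (neg B))) := by
  apply (ax4 (imp A (neg B))).mp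
  apply Ded.toProv
  apply deduction
  set D := imp A (neg B) with hD
  have hd : Ded [D] D := .hyp (by simp)
  have hnB : Ded [D] (neg B) := .mp hd (.thm hA)
  have hnnB : Ded [D] (neg (neg B)) := .mp (.thm (dni B)) (.thm hB)
  exact .mp (.mp (.thm (ax3 (neg B) (neg D))) hnnB) hnB

lemma nnPeirce : Prov (neg (neg peirceFm)) := by
  apply (ax4 (neg peirceFm)).mp
  apply Ded.toProv
  apply deduction
  set p := var 0
  set q := var 1
  set P := peirceFm with hP
  have hpP : Prov (imp p P) := by
    apply Ded.toProv
    apply deduction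
    apply deduction
    exact .hyp (by simp [peirceFm, p, q])
  have hnp : Ded [neg P] (neg p) :=
    .mp (.thm ((contrapos p P).mp hpP)) (.hyp (by simp))
  have hpq : Ded [neg P] (imp p q) := .mp (.thm (ax3 p q)) hnp
  have hP' : Ded [neg P] P := by
    apply deduction
    exact .mp (.hyp (by simp [peirceFm, p, q]))
      (hpq.weaken (by intro x hx; simp at hx; simp [hx]))
  exact .mp (.mp (.thm (ax3 P (neg (neg P)))) (.hyp (by simp))) hP'

lemma provT : ∀ φ ∈ classT, Prov φ := by
  intro φ hφ
  simp only [classT, List.mem_cons, List.not_mem_nil, or_false] at hφ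
  rcases hφ with rfl | rfl | rfl | rfl | rfl | rfl | rfl | rfl | rfl | rfl | rfl
  · exact Prov.x1
  · exact Prov.x2
  · exact Prov.x3
  · exact Prov.x4
  · exact dni (var 0)
  · exact tne (neg (var 0))
  · exact (dni _).mp (tne (neg (var 0)))
  · exact contrapos (var 0) (var 1)
  · exact perm9
  · exact negImpNeg (provId (neg (var 0))) (dni (var 1))
  · exact nnPeirce

/-! Soundness with respect to the three-valued matrix 𝔗'. -/

lemma eval3_subst (v : Nat → Fin 3) (s : Nat → Fm) (φ : Fm) :
    eval3 v (subst s φ) = eval3 (fun n => eval3 v (s n)) φ := by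
  induction φ with
  | var n => rfl
  | neg φ ih => simp [subst, eval3, ih]
  | imp φ ψ ih1 ih2 => simp [subst, eval3, ih1, ih2]

lemma sound {φ : Fm} (h : Prov φ) : ∀ v, eval3 v φ = 2 := by
  induction h with
  | x1 => intro v; exact (by decide : ∀ a b : Fin 3, gimp a (gimp b a) = 2) (v 0) (v 1)
  | x2 =>
    intro v
    exact (by decide : ∀ a b c : Fin 3,
      gimp (gimp a (gimp b c)) (gimp (gimp a b) (gimp a c)) = 2) (v 0) (v 1) (v 2)
  | x3 =>
    intro v
    exact (by decide : ∀ a b : Fin 3, gimp (gneg a) (gimp a b) = 2) (v 0) (v 1)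
  | x4 =>
    intro v
    exact (by decide : ∀ a : Fin 3, gimp (gimp a (gneg a)) (gneg a) = 2) (v 0)
  | mp _ _ ih1 ih2 =>
    intro v
    exact (by decide : ∀ a b : Fin 3, gimp a b = 2 → a = 2 → b = 2) _ _ (ih1 v) (ih2 v)
  | sub s _ ih =>
    intro v
    rw [eval3_subst]
    exact ih _

lemma notProv_of_counter {φ : Fm} (v : Nat → Fin 3) (h : eval3 v φ ≠ 2) :
    ¬ Prov φ := fun hp => h (sound hp v)

lemma notProvC : ∀ φ ∈ classC, ¬ Prov φ := by
  intro φ hφ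
  simp only [classC, List.mem_cons, List.not_mem_nil, or_false] at hφ
  rcases hφ with rfl | rfl | rfl | rfl | rfl | rfl | rfl | rfl | rfl | rfl | rfl <;>
    exact notProv_of_counter (fun _ => 0) (by decide)

lemma notProvPeirce : ¬ Prov peirceFm :=
  notProv_of_counter (fun n => if n = 0 then 0 else 1) (by decide)

/-! Truth functions. -/

lemma tautT : ∀ φ ∈ classT, truthFn φ = fun _ => true := by
  intro φ hφ
  simp only [classT, List.mem_cons, List.not_mem_nil, or_false] at hφ
  rcases hφ with rfl | rfl | rfl | rfl | rfl | rfl | rfl | rfl | rfl | rfl | rfl <;>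
    · funext v
      cases h0 : v 0 <;> cases h1 : v 1 <;> cases h2 : v 2 <;>
        simp [truthFn, evalB, h0, h1, h2]

lemma falseC : ∀ φ ∈ classC, truthFn φ = fun _ => false := by
  intro φ hφ
  simp only [classC, List.mem_cons, List.not_mem_nil, or_false] at hφ
  rcases hφ with rfl | rfl | rfl | rfl | rfl | rfl | rfl | rfl | rfl | rfl | rfl <;>
    · funext v
      cases h0 : v 0 <;> cases h1 : v 1 <;> cases h2 : v 2 <;>
        simp [truthFn, evalB, h0, h1, h2]

lemma tautPeirce : truthFn peirceFm = fun _ => true := by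
  funext v
  cases h0 : v 0 <;> cases h1 : v 1 <;> simp [truthFn, peirceFm, evalB, h0, h1]

lemma const_ne : (fun _ : Nat → Bool => false) ≠ (fun _ : Nat → Bool => true) := by
  intro h
  exact Bool.false_ne_true (congrFun h (fun _ => true))

lemma key : ∀ x ∈ dataSet, provInd x = ((truthFn x) = fun _ => true) := by
  intro x hx
  rcases hx with hx | hx
  · exact propext (iff_of_true (provT x hx) (tautT x hx))
  · refine propext (iff_of_false (notProvC x hx) ?_)
    rw [falseC x hx]
    exact const_ne

end HXAux

theorem truth_prov_iso_on_data_not_on_peirce :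
    IsoOn truthFn provInd dataSet ∧
    ¬ IsoOn truthFn provInd (dataSet ∪ {peirceFm}) := by
  open HXAux in
  constructor
  · refine ⟨fun f => f = (fun _ => true), ⟨?_, ?_, ?_⟩, ?_⟩
    · rintro y ⟨x, hx, rfl⟩
      exact ⟨x, hx, key x hx⟩
    · rintro y1 ⟨x1, hx1, rfl⟩ y2 ⟨x2, hx2, rfl⟩ hg
      have c1 : truthFn x1 = (fun _ => true) ∨ truthFn x1 = (fun _ => false) := by
        rcases hx1 with h | h
        · exact Or.inl (tautT _ h)
        · exact Or.inr (falseC _ h)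
      have c2 : truthFn x2 = (fun _ => true) ∨ truthFn x2 = (fun _ => false) := by
        rcases hx2 with h | h
        · exact Or.inl (tautT _ h)
        · exact Or.inr (falseC _ h)
      rcases c1 with h1 | h1 <;> rcases c2 with h2 | h2
      · rw [h1, h2]
      · exfalso
        have hg' : (truthFn x1 = (fun _ => true)) = (truthFn x2 = (fun _ => true)) := hg
        have : truthFn x2 = (fun _ => true) := cast hg' h1
        rw [h2] at this
        exact const_ne this
      · exfalso
        have hg' : (truthFn x1 = (fun _ => true)) = (truthFn x2 = (fun _ => true)) := hg
        have : truthFn x1 = (fun _ => true) := cast hg'.symm h2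
        rw [h1] at this
        exact const_ne this
      · rw [h1, h2]
    · rintro y ⟨x, hx, rfl⟩
      exact ⟨truthFn x, ⟨x, hx, rfl⟩, (key x hx).symm⟩
    · intro x hx
      exact key x hx
  · rintro ⟨g, -, hg⟩
    have hxT : (imp (var 0) (imp (var 1) (var 0))) ∈ dataSet ∪ {peirceFm} :=
      Or.inl (Or.inl (by simp [classT]))
    have hxP : peirceFm ∈ dataSet ∪ {peirceFm} := Or.inr rfl
    have h1 := hg _ hxT
    have h2 := hg _ hxP
    have htt : truthFn (imp (var 0) (imp (var 1) (var 0))) = truthFn peirceFm := by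
      rw [tautPeirce]
      exact tautT _ (by simp [classT])
    rw [htt] at h1
    have : provInd peirceFm = provInd (imp (var 0) (imp (var 1) (var 0))) := by
      rw [h1, h2]
    exact notProvPeirce
      (cast this.symm (show provInd (imp (var 0) (imp (var 1) (var 0))) from Prov.x1))
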